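/- arXiv:1104.5128 — 4 statements merged into one kernel-verified Lean document; each statement's English description precedes it below -/
import Mathlib

section
/- Let n ≥ 2, a ≥ 1, let D ⊊ ℝⁿ be a domain, D' ⊊ ℝⁿ a c-uniform domain (c ≥ 1), and f : D → D' an (M,C)-CQH homeomorphism (M ≥ 1, C ≥ 0). Let β be a rectifiable arc in D satisfying ℓ_k(β[s₁,s₂]) ≤ 4a²·k_D(s₁,s₂) + 4a² for all s₁, s₂ ∈ β. Let p, q ∈ β with q following p along β, and suppose d'(f(q)) = 2·d'(f(p)) and d'(f(z)) ≤ 2·d'(f(p)) for every z ∈ β[p,q]. Then there exists a₂ > 0, depending only on a, c, M, C, such that for every z ∈ β[p,q]: (1) d'(f(q)) ≤ a₂·d'(f(z)); (2) |f(q) − f(p)| ≤ a₂·d'(f(z)); (3) max{|f(p) − f(z)|, |f(q) − f(z)|} ≤ a₂·d'(f(z)). (This is Lemma 3.2.) -/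
open Set Metric MeasureTheory

noncomputable section

/-- Distance from a point to the boundary of `D`, i.e. to its complement. -/
def distBd {n : ℕ} (D : Set (EuclideanSpace ℝ (Fin n))) (z : EuclideanSpace ℝ (Fin n)) : ℝ :=
  infDist z Dᶜ

/-- A domain in ℝⁿ: a nonempty, open, connected, proper subset. -/
def IsProperDomain {n : ℕ} (D : Set (EuclideanSpace ℝ (Fin n))) : Prop :=
  IsOpen D ∧ IsConnected D ∧ D ≠ univ

/-- A rectifiable arc in `D`, parametrized by arclength on `[0, len]`:
the length of the subarc between parameters `s ≤ t` is exactly `t - s`. -/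
structure Arc (n : ℕ) (D : Set (EuclideanSpace ℝ (Fin n))) where
  len : ℝ
  len_nonneg : 0 ≤ len
  toFun : ℝ → EuclideanSpace ℝ (Fin n)
  injOn : InjOn toFun (Icc 0 len)
  mem : ∀ t ∈ Icc 0 len, toFun t ∈ D
  unitSpeed : ∀ s ∈ Icc 0 len, ∀ t ∈ Icc 0 len, s ≤ t →
    eVariationOn toFun (Icc s t) = ENNReal.ofReal (t - s)

namespace Arc

variable {n : ℕ} {D : Set (EuclideanSpace ℝ (Fin n))}

/-- The arc `γ` joins `x` to `y`. -/
def Joins (γ : Arc n D) (x y : EuclideanSpace ℝ (Fin n)) : Prop :=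
  γ.toFun 0 = x ∧ γ.toFun γ.len = y

/-- Quasihyperbolic length of the subarc of `γ` between parameters `u` and `v`:
`∫ |dz| / d(z)` along the (unit-speed) subarc. -/
def qhLen (γ : Arc n D) (u v : ℝ) : ℝ :=
  ∫ t in u..v, 1 / distBd D (γ.toFun t)

end Arc

/-- Quasihyperbolic distance in `D`. -/
def qhDist {n : ℕ} (D : Set (EuclideanSpace ℝ (Fin n))) (x y : EuclideanSpace ℝ (Fin n)) : ℝ :=
  sInf { r | ∃ γ : Arc n D, γ.Joins x y ∧ r = γ.qhLen 0 γ.len }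

/-- Inner (internal) distance in `D`: infimum of lengths of arcs joining the two points. -/
def innerDist {n : ℕ} (D : Set (EuclideanSpace ℝ (Fin n))) (x y : EuclideanSpace ℝ (Fin n)) : ℝ :=
  sInf { r | ∃ γ : Arc n D, γ.Joins x y ∧ r = γ.len }

namespace Arc

variable {n : ℕ} {D : Set (EuclideanSpace ℝ (Fin n))}

/-- `γ` is a quasihyperbolic geodesic: its quasihyperbolic length realizes the
quasihyperbolic distance between its endpoints. -/
def IsGeodesic (γ : Arc n D) : Prop :=
  γ.qhLen 0 γ.len = qhDist D (γ.toFun 0) (γ.toFun γ.len)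

/-- `γ` is a `c`-cone arc: `min (ℓ(γ[z₁,z]), ℓ(γ[z₂,z])) ≤ c·d(z)` for all `z ∈ γ`. -/
def IsConeArc (γ : Arc n D) (c : ℝ) : Prop :=
  ∀ t ∈ Icc 0 γ.len, min t (γ.len - t) ≤ c * distBd D (γ.toFun t)

end Arc

/-- `D` is an `a`-John domain. -/
def IsJohn {n : ℕ} (D : Set (EuclideanSpace ℝ (Fin n))) (a : ℝ) : Prop :=
  ∀ x ∈ D, ∀ y ∈ D, ∃ γ : Arc n D, γ.Joins x y ∧ γ.IsConeArc a

/-- `D` is a `c`-uniform domain. -/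
def IsUniform {n : ℕ} (D : Set (EuclideanSpace ℝ (Fin n))) (c : ℝ) : Prop :=
  ∀ x ∈ D, ∀ y ∈ D, ∃ γ : Arc n D, γ.Joins x y ∧ γ.IsConeArc c ∧ γ.len ≤ c * dist x y

/-- `f : D → D'` is an `(M,C)`-CQH homeomorphism (a homeomorphism of `D` onto `D'`
satisfying the coarse quasihyperbolic bi-Lipschitz condition). -/
def IsCQH {n : ℕ} (D D' : Set (EuclideanSpace ℝ (Fin n)))
    (f : EuclideanSpace ℝ (Fin n) → EuclideanSpace ℝ (Fin n)) (M C : ℝ) : Prop :=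
  ContinuousOn f D ∧ BijOn f D D' ∧
  ∀ x ∈ D, ∀ y ∈ D,
    (qhDist D x y - C) / M ≤ qhDist D' (f x) (f y) ∧
    qhDist D' (f x) (f y) ≤ M * qhDist D x y + C
section Aux

variable {n : ℕ}

lemma distBd_pos {D : Set (EuclideanSpace ℝ (Fin n))} (hDo : IsOpen D) (hDu : D ≠ univ)
    {z : EuclideanSpace ℝ (Fin n)} (hz : z ∈ D) : 0 < distBd D z := by
  have hne : Dᶜ.Nonempty := nonempty_compl.mpr hDu
  exact ((isClosed_compl_iff.mpr hDo).notMem_iff_infDist_pos hne).mp (by simp [hz])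

lemma distBd_le_add_dist {D : Set (EuclideanSpace ℝ (Fin n))}
    (x y : EuclideanSpace ℝ (Fin n)) : distBd D x ≤ distBd D y + dist x y :=
  infDist_le_infDist_add_dist

lemma Arc.dist_le {D : Set (EuclideanSpace ℝ (Fin n))} (γ : Arc n D) {s t : ℝ}
    (hs : s ∈ Icc 0 γ.len) (ht : t ∈ Icc 0 γ.len) (hst : s ≤ t) :
    dist (γ.toFun s) (γ.toFun t) ≤ t - s := by
  have h := eVariationOn.edist_le γ.toFun (x := s) (y := t)
    (Set.mem_Icc.mpr ⟨le_refl s, hst⟩) (Set.mem_Icc.mpr ⟨hst, le_refl t⟩)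
  rw [γ.unitSpeed s hs t ht hst] at h
  exact (edist_le_ofReal (by linarith)).mp h

lemma Arc.continuousOn {D : Set (EuclideanSpace ℝ (Fin n))} (γ : Arc n D) :
    ContinuousOn γ.toFun (Icc 0 γ.len) := by
  have : LipschitzOnWith 1 γ.toFun (Icc 0 γ.len) := by
    apply LipschitzOnWith.of_dist_le_mul
    intro x hx y hy
    rw [NNReal.coe_one, one_mul, Real.dist_eq]
    rcases le_total x y with h | h
    · have h1 := γ.dist_le hx hy h
      have h2 : y - x ≤ |x - y| := by rw [abs_sub_comm]; exact le_abs_self _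
      rw [dist_comm] at h1 ⊢
      linarith
    · have h1 := γ.dist_le hy hx h
      have h2 : x - y ≤ |x - y| := le_abs_self _
      rw [dist_comm] at h1
      linarith
  exact this.continuousOn

lemma integrand_contOn {D : Set (EuclideanSpace ℝ (Fin n))} (hDo : IsOpen D) (hDu : D ≠ univ)
    (γ : Arc n D) : ContinuousOn (fun t => 1 / distBd D (γ.toFun t)) (Icc 0 γ.len) := by
  apply ContinuousOn.div continuousOn_const
  · exact (Metric.continuous_infDist_pt Dᶜ).comp_continuousOn γ.continuousOn
  · exact fun t ht => (distBd_pos hDo hDu (γ.mem t ht)).ne'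

lemma integrand_intInt {D : Set (EuclideanSpace ℝ (Fin n))} (hDo : IsOpen D) (hDu : D ≠ univ)
    (γ : Arc n D) {u v : ℝ} (hu : u ∈ Icc 0 γ.len) (hv : v ∈ Icc 0 γ.len) :
    IntervalIntegrable (fun t => 1 / distBd D (γ.toFun t)) volume u v :=
  ((integrand_contOn hDo hDu γ).mono (uIcc_subset_Icc hu hv)).intervalIntegrable

lemma Arc.qhLen_nonneg {D : Set (EuclideanSpace ℝ (Fin n))} (γ : Arc n D) {u v : ℝ}
    (h : u ≤ v) : 0 ≤ γ.qhLen u v :=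
  intervalIntegral.integral_nonneg h
    (fun t _ => one_div_nonneg.mpr Metric.infDist_nonneg)

lemma Arc.qhLen_add {D : Set (EuclideanSpace ℝ (Fin n))} (hDo : IsOpen D) (hDu : D ≠ univ)
    (γ : Arc n D) {u v w : ℝ} (hu : u ∈ Icc 0 γ.len) (hv : v ∈ Icc 0 γ.len)
    (hw : w ∈ Icc 0 γ.len) : γ.qhLen u v + γ.qhLen v w = γ.qhLen u w :=
  intervalIntegral.integral_add_adjacent_intervals (integrand_intInt hDo hDu γ hu hv)
    (integrand_intInt hDo hDu γ hv hw)

end Aux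
section Aux2

variable {n : ℕ}

/-- Subarc of an arc, reparametrized to start at `0`. -/
def Arc.subarc {D : Set (EuclideanSpace ℝ (Fin n))} (γ : Arc n D) (s t : ℝ)
    (hs : s ∈ Icc 0 γ.len) (ht : t ∈ Icc 0 γ.len) (hst : s ≤ t) : Arc n D where
  len := t - s
  len_nonneg := by linarith
  toFun := fun u => γ.toFun (s + u)
  injOn := by
    intro u hu v hv h
    simp only [mem_Icc] at hu hv
    have hmu : s + u ∈ Icc 0 γ.len := by
      simp only [mem_Icc]; constructor <;> [linarith [hs.1, hu.1]; linarith [hu.2, ht.2]]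
    have hmv : s + v ∈ Icc 0 γ.len := by
      simp only [mem_Icc]; constructor <;> [linarith [hs.1, hv.1]; linarith [hv.2, ht.2]]
    have := γ.injOn hmu hmv h
    linarith [this]
  mem := by
    intro u hu
    simp only [mem_Icc] at hu
    exact γ.mem _ (by simp only [mem_Icc]; constructor <;> [linarith [hs.1]; linarith [ht.2]])
  unitSpeed := by
    intro a ha b hb hab
    simp only [mem_Icc] at ha hb
    have hcomp : eVariationOn (fun u => γ.toFun (s + u)) (Icc a b)
        = eVariationOn γ.toFun ((fun u => s + u) '' Icc a b) :=
      eVariationOn.comp_eq_of_monotoneOn γ.toFun _ (fun x _ y _ hxy => by simpa using hxy)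
    rw [hcomp, image_const_add_Icc]
    rw [γ.unitSpeed (s + a) (by simp only [mem_Icc]; constructor <;>
        [linarith [hs.1, ha.1]; linarith [ha.2, ht.2]])
      (s + b) (by simp only [mem_Icc]; constructor <;>
        [linarith [hs.1, hb.1]; linarith [hb.2, ht.2]]) (by linarith)]
    congr 1
    ring

lemma Arc.subarc_joins {D : Set (EuclideanSpace ℝ (Fin n))} (γ : Arc n D) (s t : ℝ)
    (hs : s ∈ Icc 0 γ.len) (ht : t ∈ Icc 0 γ.len) (hst : s ≤ t) :
    (γ.subarc s t hs ht hst).Joins (γ.toFun s) (γ.toFun t) := by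
  constructor
  · show γ.toFun (s + 0) = γ.toFun s
    rw [add_zero]
  · show γ.toFun (s + (t - s)) = γ.toFun t
    congr 1
    ring

lemma Arc.subarc_qhLen {D : Set (EuclideanSpace ℝ (Fin n))} (γ : Arc n D) (s t : ℝ)
    (hs : s ∈ Icc 0 γ.len) (ht : t ∈ Icc 0 γ.len) (hst : s ≤ t) :
    (γ.subarc s t hs ht hst).qhLen 0 (γ.subarc s t hs ht hst).len = γ.qhLen s t := by
  show (∫ u in (0:ℝ)..(t - s), 1 / distBd D (γ.toFun (s + u))) = γ.qhLen s t
  rw [intervalIntegral.integral_comp_add_left (fun x => 1 / distBd D (γ.toFun x)) s]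
  have h1 : s + 0 = s := by ring
  have h2 : s + (t - s) = t := by ring
  rw [h1, h2]
  rfl

lemma qhDist_nonneg {D : Set (EuclideanSpace ℝ (Fin n))} (x y : EuclideanSpace ℝ (Fin n)) :
    0 ≤ qhDist D x y := by
  apply Real.sInf_nonneg
  rintro r ⟨γ, -, rfl⟩
  exact γ.qhLen_nonneg γ.len_nonneg

lemma qhDist_bddBelow {D : Set (EuclideanSpace ℝ (Fin n))} (x y : EuclideanSpace ℝ (Fin n)) :
    BddBelow { r | ∃ γ : Arc n D, γ.Joins x y ∧ r = γ.qhLen 0 γ.len } := by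
  refine ⟨0, ?_⟩
  rintro r ⟨γ, -, rfl⟩
  exact γ.qhLen_nonneg γ.len_nonneg

lemma qhDist_le_qhLen {D : Set (EuclideanSpace ℝ (Fin n))} (γ : Arc n D) {s t : ℝ}
    (hs : s ∈ Icc 0 γ.len) (ht : t ∈ Icc 0 γ.len) (hst : s ≤ t) :
    qhDist D (γ.toFun s) (γ.toFun t) ≤ γ.qhLen s t := by
  apply csInf_le (qhDist_bddBelow _ _)
  exact ⟨γ.subarc s t hs ht hst, γ.subarc_joins s t hs ht hst,
    (γ.subarc_qhLen s t hs ht hst).symm⟩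

lemma intInt_one_div_shift {g0 : ℝ} (hg : 0 < g0) {aa bb : ℝ} (h0 : 0 ≤ aa) (hab : aa ≤ bb) :
    IntervalIntegrable (fun t => 1 / (g0 + t)) MeasureTheory.volume aa bb := by
  apply ContinuousOn.intervalIntegrable
  apply ContinuousOn.div continuousOn_const (continuousOn_const.add continuousOn_id)
  intro t ht
  rw [uIcc_of_le hab] at ht
  have h1 := ht.1
  exact (by nlinarith : (0:ℝ) < g0 + t).ne'

lemma log_shift_integral {g0 L : ℝ} (hg : 0 < g0) (hL : 0 ≤ L) :
    (∫ t in (0:ℝ)..L, 1 / (g0 + t)) = Real.log ((g0 + L) / g0) := by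
  rw [intervalIntegral.integral_comp_add_left (fun x => 1 / x) g0]
  rw [integral_one_div]
  · rw [add_zero]
  · rw [add_zero, Set.uIcc_of_le (by linarith)]
    rintro ⟨h1, -⟩
    linarith

end Aux2
section Aux3

variable {n : ℕ}

lemma arc_qhLen_lower₁ {D : Set (EuclideanSpace ℝ (Fin n))} (hDo : IsOpen D) (hDu : D ≠ univ)
    (γ : Arc n D) :
    Real.log (1 + γ.len / distBd D (γ.toFun 0)) ≤ γ.qhLen 0 γ.len := by
  have hL0 : (0:ℝ) ∈ Icc 0 γ.len := ⟨le_refl _, γ.len_nonneg⟩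
  have hLL : γ.len ∈ Icc 0 γ.len := ⟨γ.len_nonneg, le_refl _⟩
  set g0 := distBd D (γ.toFun 0) with hg0def
  have hg : 0 < g0 := distBd_pos hDo hDu (γ.mem 0 hL0)
  have hmono : ∀ t ∈ Icc (0:ℝ) γ.len, 1 / (g0 + t) ≤ 1 / distBd D (γ.toFun t) := by
    intro t ht
    have h1 : dist (γ.toFun 0) (γ.toFun t) ≤ t - 0 := γ.dist_le hL0 ht ht.1
    have h2 : distBd D (γ.toFun t) ≤ distBd D (γ.toFun 0) + dist (γ.toFun t) (γ.toFun 0) :=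
      distBd_le_add_dist _ _
    rw [dist_comm] at h2
    exact one_div_le_one_div_of_le (distBd_pos hDo hDu (γ.mem t ht)) (by linarith)
  have hint := intervalIntegral.integral_mono_on γ.len_nonneg
    (intInt_one_div_shift hg le_rfl γ.len_nonneg) (integrand_intInt hDo hDu γ hL0 hLL) hmono
  rw [log_shift_integral hg γ.len_nonneg] at hint
  have heq : 1 + γ.len / g0 = (g0 + γ.len) / g0 := by field_simp
  rw [heq]
  exact hint

lemma arc_qhLen_lower₂ {D : Set (EuclideanSpace ℝ (Fin n))} (hDo : IsOpen D) (hDu : D ≠ univ)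
    (γ : Arc n D) :
    Real.log (1 + γ.len / distBd D (γ.toFun γ.len)) ≤ γ.qhLen 0 γ.len := by
  have hL0 : (0:ℝ) ∈ Icc 0 γ.len := ⟨le_refl _, γ.len_nonneg⟩
  have hLL : γ.len ∈ Icc 0 γ.len := ⟨γ.len_nonneg, le_refl _⟩
  set L := γ.len with hLdef
  set gL := distBd D (γ.toFun L) with hgLdef
  have hg : 0 < gL := distBd_pos hDo hDu (γ.mem L hLL)
  have hmono : ∀ t ∈ Icc (0:ℝ) L, (fun u => 1 / (gL + u)) (L - t) ≤ 1 / distBd D (γ.toFun t) := by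
    intro t ht
    have h1 : dist (γ.toFun t) (γ.toFun L) ≤ L - t := γ.dist_le ht hLL ht.2
    have h2 : distBd D (γ.toFun t) ≤ distBd D (γ.toFun L) + dist (γ.toFun t) (γ.toFun L) :=
      distBd_le_add_dist _ _
    exact one_div_le_one_div_of_le (distBd_pos hDo hDu (γ.mem t ht)) (by linarith)
  have hintg : IntervalIntegrable (fun t => (fun u => 1 / (gL + u)) (L - t))
      MeasureTheory.volume 0 L := by
    apply ContinuousOn.intervalIntegrable
    show ContinuousOn (fun t => 1 / (gL + (L - t))) (uIcc 0 L)
    apply ContinuousOn.div continuousOn_const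
      (continuousOn_const.add (continuousOn_const.sub continuousOn_id))
    intro t ht
    rw [uIcc_of_le γ.len_nonneg] at ht
    have h2 := ht.2
    exact (by nlinarith : (0:ℝ) < gL + (L - t)).ne'
  have hint := intervalIntegral.integral_mono_on γ.len_nonneg hintg
    (integrand_intInt hDo hDu γ hL0 hLL) hmono
  have hsub : (∫ t in (0:ℝ)..L, (fun u => 1 / (gL + u)) (L - t))
      = ∫ u in (0:ℝ)..L, 1 / (gL + u) := by
    rw [intervalIntegral.integral_comp_sub_left (fun u => 1 / (gL + u)) L]
    norm_num
  rw [hsub, log_shift_integral hg γ.len_nonneg] at hint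
  have heq : 1 + L / gL = (gL + L) / gL := by field_simp
  rw [heq]
  exact hint

lemma qhDist_lower₁ {D : Set (EuclideanSpace ℝ (Fin n))} (hDo : IsOpen D) (hDu : D ≠ univ)
    {x y : EuclideanSpace ℝ (Fin n)} (hx : x ∈ D)
    (hne : ∃ γ : Arc n D, γ.Joins x y) :
    Real.log (1 + dist x y / distBd D x) ≤ qhDist D x y := by
  obtain ⟨γ₀, hγ₀⟩ := hne
  refine le_csInf ⟨_, γ₀, hγ₀, rfl⟩ ?_
  rintro r ⟨γ, ⟨h0, hE⟩, rfl⟩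
  have hlow := arc_qhLen_lower₁ hDo hDu γ
  rw [h0] at hlow
  have hd : dist x y ≤ γ.len := by
    rw [← h0, ← hE]
    simpa using γ.dist_le ⟨le_refl _, γ.len_nonneg⟩ ⟨γ.len_nonneg, le_refl _⟩ γ.len_nonneg
  have hg : 0 < distBd D x := distBd_pos hDo hDu hx
  refine le_trans (Real.log_le_log (by positivity) ?_) hlow
  gcongr

lemma qhDist_lower₂ {D : Set (EuclideanSpace ℝ (Fin n))} (hDo : IsOpen D) (hDu : D ≠ univ)
    {x y : EuclideanSpace ℝ (Fin n)} (hy : y ∈ D)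
    (hne : ∃ γ : Arc n D, γ.Joins x y) :
    Real.log (1 + dist x y / distBd D y) ≤ qhDist D x y := by
  obtain ⟨γ₀, hγ₀⟩ := hne
  refine le_csInf ⟨_, γ₀, hγ₀, rfl⟩ ?_
  rintro r ⟨γ, ⟨h0, hE⟩, rfl⟩
  have hlow := arc_qhLen_lower₂ hDo hDu γ
  rw [hE] at hlow
  have hd : dist x y ≤ γ.len := by
    rw [← h0, ← hE]
    simpa using γ.dist_le ⟨le_refl _, γ.len_nonneg⟩ ⟨γ.len_nonneg, le_refl _⟩ γ.len_nonneg
  have hg : 0 < distBd D y := distBd_pos hDo hDu hy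
  refine le_trans (Real.log_le_log (by positivity) ?_) hlow
  gcongr

end Aux3
section Aux4

variable {n : ℕ}

lemma qhDist_le_of_uniform {D : Set (EuclideanSpace ℝ (Fin n))} (hDo : IsOpen D)
    (hDu : D ≠ univ) {c : ℝ} (hc : 1 ≤ c) (hU : IsUniform D c)
    {x y : EuclideanSpace ℝ (Fin n)} (hx : x ∈ D) (hy : y ∈ D) :
    qhDist D x y ≤ 2 * (1 + c) * (Real.log (1 + c * dist x y / distBd D x)
      + Real.log (1 + c * dist x y / distBd D y)) := by
  obtain ⟨γ, hJ, hCone, hLen⟩ := hU x hx y hy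
  have hL0 : (0:ℝ) ∈ Icc 0 γ.len := ⟨le_refl _, γ.len_nonneg⟩
  have hLL : γ.len ∈ Icc 0 γ.len := ⟨γ.len_nonneg, le_refl _⟩
  have hLh : γ.len / 2 ∈ Icc 0 γ.len := ⟨by linarith [γ.len_nonneg], by linarith [γ.len_nonneg]⟩
  set L := γ.len with hLdef
  have hgx : 0 < distBd D x := distBd_pos hDo hDu hx
  have hgy : 0 < distBd D y := distBd_pos hDo hDu hy
  have hdnn : 0 ≤ dist x y := dist_nonneg
  have hqd : qhDist D x y ≤ γ.qhLen 0 L := by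
    apply csInf_le (qhDist_bddBelow _ _)
    exact ⟨γ, hJ, rfl⟩
  have hsplit : γ.qhLen 0 L = γ.qhLen 0 (L/2) + γ.qhLen (L/2) L :=
    (γ.qhLen_add hDo hDu hL0 hLh hLL).symm
  -- first half bound
  have hb1 : γ.qhLen 0 (L/2) ≤ 2 * (1 + c) * Real.log (1 + c * dist x y / distBd D x) := by
    set g0 := distBd D x with hg0
    have hmono : ∀ t ∈ Icc (0:ℝ) (L/2),
        1 / distBd D (γ.toFun t) ≤ 2 * (1 + c) * (1 / (g0 + t)) := by
      intro t ht
      have htL : t ∈ Icc (0:ℝ) L := ⟨ht.1, by linarith [ht.2, γ.len_nonneg]⟩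
      have hd : 0 < distBd D (γ.toFun t) := distBd_pos hDo hDu (γ.mem t htL)
      have hcone := hCone t htL
      have hmin : min t (L - t) = t := min_eq_left (by linarith [ht.2, γ.len_nonneg])
      rw [hmin] at hcone
      have hlip : g0 ≤ distBd D (γ.toFun t) + t := by
        have h1 : dist x (γ.toFun t) ≤ t := by
          have hh := γ.dist_le hL0 htL ht.1
          rw [hJ.1] at hh
          linarith
        have h2 : distBd D x ≤ distBd D (γ.toFun t) + dist x (γ.toFun t) :=
          distBd_le_add_dist _ _
        linarith
      have hkey : g0 + t ≤ 2 * (1 + c) * distBd D (γ.toFun t) := by nlinarith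
      have hpos : (0:ℝ) < g0 + t := by nlinarith [ht.1]
      rw [mul_one_div, div_le_div_iff₀ hd hpos]
      nlinarith
    have hig : IntervalIntegrable (fun t => 2 * (1 + c) * (1 / (g0 + t)))
        MeasureTheory.volume 0 (L/2) :=
      (intInt_one_div_shift hgx le_rfl hLh.1).const_mul _
    have hint := intervalIntegral.integral_mono_on hLh.1
      (integrand_intInt hDo hDu γ hL0 hLh) hig hmono
    rw [intervalIntegral.integral_const_mul, log_shift_integral hgx hLh.1] at hint
    refine le_trans hint ?_
    have h2c : (0:ℝ) < 2 * (1 + c) := by linarith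
    apply mul_le_mul_of_nonneg_left _ h2c.le
    have heq : 1 + c * dist x y / g0 = (g0 + c * dist x y) / g0 := by field_simp
    rw [heq]
    apply Real.log_le_log (div_pos (by nlinarith [γ.len_nonneg]) hgx)
    gcongr
    nlinarith [γ.len_nonneg, hLen]
  -- second half bound
  have hb2 : γ.qhLen (L/2) L ≤ 2 * (1 + c) * Real.log (1 + c * dist x y / distBd D y) := by
    set gL := distBd D y with hgL
    have hmono : ∀ t ∈ Icc (L/2) L,
        1 / distBd D (γ.toFun t) ≤ 2 * (1 + c) * ((fun u => 1 / (gL + u)) (L - t)) := by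
      intro t ht
      have htL : t ∈ Icc (0:ℝ) L := ⟨by linarith [ht.1, γ.len_nonneg], ht.2⟩
      have hd : 0 < distBd D (γ.toFun t) := distBd_pos hDo hDu (γ.mem t htL)
      have hcone := hCone t htL
      have hmin : min t (L - t) = L - t := min_eq_right (by linarith [ht.1])
      rw [hmin] at hcone
      have hlip : gL ≤ distBd D (γ.toFun t) + (L - t) := by
        have h1 : dist (γ.toFun t) y ≤ L - t := by
          have hh := γ.dist_le htL hLL ht.2
          rw [hJ.2] at hh
          linarith
        have h2 : distBd D y ≤ distBd D (γ.toFun t) + dist y (γ.toFun t) :=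
          distBd_le_add_dist _ _
        rw [dist_comm] at h2
        linarith
      have hkey : gL + (L - t) ≤ 2 * (1 + c) * distBd D (γ.toFun t) := by nlinarith
      have hpos : (0:ℝ) < gL + (L - t) := by nlinarith [ht.2, hgy]
      show 1 / distBd D (γ.toFun t) ≤ 2 * (1 + c) * (1 / (gL + (L - t)))
      rw [mul_one_div, div_le_div_iff₀ hd hpos]
      nlinarith
    have hig : IntervalIntegrable (fun t => 2 * (1 + c) * ((fun u => 1 / (gL + u)) (L - t)))
        MeasureTheory.volume (L/2) L := by
      apply IntervalIntegrable.const_mul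
      apply ContinuousOn.intervalIntegrable
      show ContinuousOn (fun t => 1 / (gL + (L - t))) (uIcc (L/2) L)
      apply ContinuousOn.div continuousOn_const
        (continuousOn_const.add (continuousOn_const.sub continuousOn_id))
      intro t ht
      rw [uIcc_of_le (by linarith [γ.len_nonneg])] at ht
      have h2 := ht.2
      exact (by nlinarith : (0:ℝ) < gL + (L - t)).ne'
    have hint := intervalIntegral.integral_mono_on (by linarith [γ.len_nonneg] : L/2 ≤ L)
      (integrand_intInt hDo hDu γ hLh hLL) hig hmono
    rw [intervalIntegral.integral_const_mul] at hint
    have hsub : (∫ t in (L/2)..L, (fun u => 1 / (gL + u)) (L - t))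
        = ∫ u in (0:ℝ)..(L/2), 1 / (gL + u) := by
      rw [intervalIntegral.integral_comp_sub_left (fun u => 1 / (gL + u)) L]
      have e1 : L - L = 0 := by ring
      have e2 : L - L/2 = L/2 := by ring
      rw [e1, e2]
    rw [hsub, log_shift_integral hgy hLh.1] at hint
    refine le_trans hint ?_
    have h2c : (0:ℝ) < 2 * (1 + c) := by linarith
    apply mul_le_mul_of_nonneg_left _ h2c.le
    have heq : 1 + c * dist x y / gL = (gL + c * dist x y) / gL := by field_simp
    rw [heq]
    apply Real.log_le_log (div_pos (by nlinarith [γ.len_nonneg]) hgy)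
    gcongr
    nlinarith [γ.len_nonneg, hLen]
  calc qhDist D x y ≤ γ.qhLen 0 (L/2) + γ.qhLen (L/2) L := by rw [← hsplit]; exact hqd
    _ ≤ 2 * (1 + c) * Real.log (1 + c * dist x y / distBd D x)
        + 2 * (1 + c) * Real.log (1 + c * dist x y / distBd D y) := by linarith
    _ = 2 * (1 + c) * (Real.log (1 + c * dist x y / distBd D x)
        + Real.log (1 + c * dist x y / distBd D y)) := by ring

lemma bootstrap_ineq {ρ P Q c : ℝ} (hρ : 0 ≤ ρ) (hP : 0 ≤ P) (hQ : 0 < Q) (hc : 0 < c)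
    (h : ρ ≤ P + Q * Real.log (1 + c * ρ)) :
    ρ ≤ 2 * P + 2 * Q * Real.log (1 + 2 * Q * c) := by
  have h1 : (0:ℝ) < 1 + c * ρ := by positivity
  have h2 : (0:ℝ) < 1 + 2 * Q * c := by positivity
  have hlog : Real.log (1 + c * ρ) ≤ Real.log (1 + 2 * Q * c)
      + ((1 + c * ρ) / (1 + 2 * Q * c) - 1) := by
    have hx := Real.log_le_sub_one_of_pos (x := (1 + c * ρ) / (1 + 2 * Q * c)) (by positivity)
    rw [Real.log_div h1.ne' h2.ne'] at hx
    linarith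
  have h3 : (1 + c * ρ) / (1 + 2 * Q * c) - 1 ≤ ρ / (2 * Q) := by
    rw [div_sub_one h2.ne', div_le_div_iff₀ h2 (by positivity)]
    nlinarith [mul_pos (mul_pos hQ hQ) hc]
  have h4 : Q * (ρ / (2 * Q)) = ρ / 2 := by field_simp
  have hlog2 : Real.log (1 + c * ρ) ≤ Real.log (1 + 2 * Q * c) + ρ / (2 * Q) := by linarith
  have h5 : Q * Real.log (1 + c * ρ)
      ≤ Q * Real.log (1 + 2 * Q * c) + ρ / 2 := by
    have hm := mul_le_mul_of_nonneg_left hlog2 hQ.le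
    rw [mul_add, h4] at hm
    linarith
  linarith

end Aux4
section Consts

/-- Step constant. -/
def qhLam (M C : ℝ) : ℝ := 2 * (Real.exp (M + C) - 1)

def qhP (a M C : ℝ) : ℝ := (4 * a ^ 2 * C + 4 * a ^ 2 + 2) * qhLam M C

def qhQ (a c M C : ℝ) : ℝ := 16 * a ^ 2 * M * (1 + c) * qhLam M C

def qhRho (a c M C : ℝ) : ℝ :=
  2 * qhP a M C + 2 * qhQ a c M C * Real.log (1 + 2 * qhQ a c M C * c)

def qhK0 (a c M C : ℝ) : ℝ := 4 * (1 + c) * Real.log (1 + c * qhRho a c M C)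

def qhT0 (a c M C : ℝ) : ℝ := 4 * a ^ 2 * (M * qhK0 a c M C + C) + 4 * a ^ 2

def qhK1 (a c M C : ℝ) : ℝ := M * qhT0 a c M C + C

def qhA2 (a c M C : ℝ) : ℝ := Real.exp (qhK1 a c M C) * (1 + qhRho a c M C)

variable {a c M C : ℝ} (ha : 1 ≤ a) (hc : 1 ≤ c) (hM : 1 ≤ M) (hC : 0 ≤ C)
include ha hc hM hC

lemma qhLam_pos : 0 < qhLam M C := by
  unfold qhLam
  have h1 : (1:ℝ) < Real.exp (M + C) := by
    rw [← Real.exp_zero]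
    exact Real.exp_lt_exp.mpr (by linarith)
  linarith

lemma qhP_pos : 0 < qhP a M C := by
  unfold qhP
  have h := qhLam_pos ha hc hM hC
  nlinarith [sq_nonneg a, mul_nonneg (sq_nonneg a) hC]

lemma qhQ_pos : 0 < qhQ a c M C := by
  unfold qhQ
  have h := qhLam_pos ha hc hM hC
  nlinarith [sq_nonneg a, mul_pos (mul_pos (by nlinarith [sq_nonneg (a-1)] : (0:ℝ) < 16 * a ^ 2) (by linarith : (0:ℝ) < M)) (by linarith : (0:ℝ) < 1 + c)]

lemma qhRho_pos : 0 < qhRho a c M C := by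
  unfold qhRho
  have hP := qhP_pos ha hc hM hC
  have hQ := qhQ_pos ha hc hM hC
  have hlog : 0 ≤ Real.log (1 + 2 * qhQ a c M C * c) :=
    Real.log_nonneg (by nlinarith)
  nlinarith

lemma qhK0_nonneg : 0 ≤ qhK0 a c M C := by
  unfold qhK0
  have hρ := qhRho_pos ha hc hM hC
  have hlog : 0 ≤ Real.log (1 + c * qhRho a c M C) :=
    Real.log_nonneg (by nlinarith)
  nlinarith

lemma qhT0_pos : 0 < qhT0 a c M C := by
  unfold qhT0
  have hk := qhK0_nonneg ha hc hM hC
  nlinarith [sq_nonneg (a-1), sq_nonneg a, mul_nonneg (mul_nonneg (sq_nonneg a) (by linarith : (0:ℝ) ≤ M)) hk]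

lemma qhK1_pos : 0 < qhK1 a c M C := by
  unfold qhK1
  have h := qhT0_pos ha hc hM hC
  nlinarith

lemma qhA2_pos : 0 < qhA2 a c M C := by
  unfold qhA2
  have h := qhRho_pos ha hc hM hC
  have := Real.exp_pos (qhK1 a c M C)
  nlinarith

end Consts
set_option maxHeartbeats 2000000 in
/-- **Lemma 3.2.** Let `D ⊊ ℝⁿ` (`n ≥ 2`) be a domain, `D' ⊊ ℝⁿ` a `c`-uniform domain, and
`f : D → D'` an `(M,C)`-CQH homeomorphism.  Let `β` be an arc in `D` satisfying
`ℓ_k(β[s₁,s₂]) ≤ 4a²·k_D(s₁,s₂) + 4a²` for all `s₁, s₂ ∈ β`, and let `p = β(tp)`,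
`q = β(tq)` with `tp ≤ tq`, `d'(f q) = 2 d'(f p)` and `d'(f z) ≤ 2 d'(f p)` on `β[p,q]`.
Then there is `a₂ > 0`, depending only on `a, c, M, C`, bounding the stated quantities. -/
theorem lemma_3_2
    (a c M C : ℝ) (ha : 1 ≤ a) (hc : 1 ≤ c) (hM : 1 ≤ M) (hC : 0 ≤ C) :
    ∃ a₂ > 0, ∀ (n : ℕ), 2 ≤ n →
      ∀ (D D' : Set (EuclideanSpace ℝ (Fin n)))
        (f : EuclideanSpace ℝ (Fin n) → EuclideanSpace ℝ (Fin n)),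
        IsProperDomain D → IsProperDomain D' → IsUniform D' c →
        IsCQH D D' f M C →
        ∀ (β : Arc n D),
          (∀ s ∈ Icc (0:ℝ) β.len, ∀ t ∈ Icc (0:ℝ) β.len, s ≤ t →
            β.qhLen s t ≤ 4 * a ^ 2 * qhDist D (β.toFun s) (β.toFun t) + 4 * a ^ 2) →
          ∀ tp ∈ Icc (0:ℝ) β.len, ∀ tq ∈ Icc (0:ℝ) β.len, tp ≤ tq →
            distBd D' (f (β.toFun tq)) = 2 * distBd D' (f (β.toFun tp)) →
            (∀ t ∈ Icc tp tq, distBd D' (f (β.toFun t)) ≤ 2 * distBd D' (f (β.toFun tp))) →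
            ∀ t ∈ Icc tp tq,
              distBd D' (f (β.toFun tq)) ≤ a₂ * distBd D' (f (β.toFun t)) ∧
              dist (f (β.toFun tq)) (f (β.toFun tp)) ≤ a₂ * distBd D' (f (β.toFun t)) ∧
              max (dist (f (β.toFun tp)) (f (β.toFun t)))
                  (dist (f (β.toFun tq)) (f (β.toFun t)))
                ≤ a₂ * distBd D' (f (β.toFun t)) := by
  -- abbreviations for the constants
  have hΛ : 0 < qhLam M C := qhLam_pos ha hc hM hC
  have hP0 : 0 < qhP a M C := qhP_pos ha hc hM hC
  have hQ0 : 0 < qhQ a c M C := qhQ_pos ha hc hM hC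
  have hρ₀0 : 0 < qhRho a c M C := qhRho_pos ha hc hM hC
  have hk₀0 : 0 ≤ qhK0 a c M C := qhK0_nonneg ha hc hM hC
  have hT₀0 : 0 < qhT0 a c M C := qhT0_pos ha hc hM hC
  have hk₁0 : 0 < qhK1 a c M C := qhK1_pos ha hc hM hC
  have hM0 : (0:ℝ) < M := by linarith
  have hc0 : (0:ℝ) < c := by linarith
  have ha2 : (1:ℝ) ≤ a ^ 2 := by nlinarith
  refine ⟨qhA2 a c M C, qhA2_pos ha hc hM hC, ?_⟩
  intro n _hn D D' f hD hD' hU hf β hβ tp htp tq htq htptq hdq hle t ht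
  obtain ⟨hDo, _, hDu⟩ := hD
  obtain ⟨hD'o, _, hD'u⟩ := hD'
  obtain ⟨_hfc, hbij, hcqh⟩ := hf
  have hexists : ∀ x ∈ D', ∀ y ∈ D', ∃ γ : Arc n D', γ.Joins x y := by
    intro x hx y hy
    obtain ⟨γ, hJ, -, -⟩ := hU x hx y hy
    exact ⟨γ, hJ⟩
  have hpd : β.toFun tp ∈ D := β.mem tp htp
  have hqd : β.toFun tq ∈ D := β.mem tq htq
  have hfp : f (β.toFun tp) ∈ D' := hbij.mapsTo hpd
  have hfq : f (β.toFun tq) ∈ D' := hbij.mapsTo hqd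
  obtain ⟨d₀, hd₀def⟩ : ∃ x, x = distBd D' (f (β.toFun tp)) := ⟨_, rfl⟩
  rw [← hd₀def] at hdq hle
  have hd₀ : 0 < d₀ := by rw [hd₀def]; exact distBd_pos hD'o hD'u hfp
  -- the one-step estimate
  have step : ∀ u v : ℝ, tp ≤ u → u ≤ v → v ≤ tq → β.qhLen u v ≤ 1 →
      dist (f (β.toFun u)) (f (β.toFun v)) ≤ qhLam M C * d₀ := by
    intro u v hu huv hv hq1
    have hum : u ∈ Icc 0 β.len := ⟨htp.1.trans hu, (huv.trans hv).trans htq.2⟩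
    have hvm : v ∈ Icc 0 β.len := ⟨htp.1.trans (hu.trans huv), hv.trans htq.2⟩
    have hud : β.toFun u ∈ D := β.mem u hum
    have hvd : β.toFun v ∈ D := β.mem v hvm
    have hfu : f (β.toFun u) ∈ D' := hbij.mapsTo hud
    have hfv : f (β.toFun v) ∈ D' := hbij.mapsTo hvd
    have hkD : qhDist D (β.toFun u) (β.toFun v) ≤ 1 :=
      (qhDist_le_qhLen β hum hvm huv).trans hq1
    have hk' : qhDist D' (f (β.toFun u)) (f (β.toFun v)) ≤ M + C := by
      have h := (hcqh _ hud _ hvd).2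
      nlinarith
    have hdu : 0 < distBd D' (f (β.toFun u)) := distBd_pos hD'o hD'u hfu
    have hlow := qhDist_lower₁ hD'o hD'u hfu (hexists _ hfu _ hfv)
    have hpos : 0 < 1 + dist (f (β.toFun u)) (f (β.toFun v)) / distBd D' (f (β.toFun u)) := by
      positivity
    have hratio : 1 + dist (f (β.toFun u)) (f (β.toFun v)) / distBd D' (f (β.toFun u))
        ≤ Real.exp (M + C) := by
      rw [← Real.exp_log hpos]
      exact Real.exp_le_exp.mpr (hlow.trans hk')
    have hd1 : dist (f (β.toFun u)) (f (β.toFun v))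
        ≤ (Real.exp (M + C) - 1) * distBd D' (f (β.toFun u)) :=
      (div_le_iff₀ hdu).mp (by linarith)
    have hdub : distBd D' (f (β.toFun u)) ≤ 2 * d₀ := hle u ⟨hu, huv.trans hv⟩
    have hE1 : (1:ℝ) ≤ Real.exp (M + C) := by
      rw [← Real.exp_zero]
      exact Real.exp_le_exp.mpr (by linarith)
    have : (Real.exp (M + C) - 1) * distBd D' (f (β.toFun u))
        ≤ (Real.exp (M + C) - 1) * (2 * d₀) :=
      mul_le_mul_of_nonneg_left hdub (by linarith)
    unfold qhLam
    nlinarith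
  -- the chain estimate
  have chain : ∀ m : ℕ, ∀ u v : ℝ, tp ≤ u → u ≤ v → v ≤ tq → β.qhLen u v ≤ (m:ℝ) →
      dist (f (β.toFun u)) (f (β.toFun v)) ≤ ((m:ℝ) + 1) * (qhLam M C * d₀) := by
    intro m
    induction m with
    | zero =>
      intro u v hu huv hv hq
      have := step u v hu huv hv (hq.trans (by norm_num))
      push_cast
      linarith
    | succ m ih =>
      intro u v hu huv hv hq
      have hum : u ∈ Icc 0 β.len := ⟨htp.1.trans hu, (huv.trans hv).trans htq.2⟩
      have hvm : v ∈ Icc 0 β.len := ⟨htp.1.trans (hu.trans huv), hv.trans htq.2⟩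
      by_cases hcase : β.qhLen u v ≤ (m:ℝ)
      · have := ih u v hu huv hv hcase
        have hΛd : 0 < qhLam M C * d₀ := mul_pos hΛ hd₀
        push_cast
        push_cast at this
        nlinarith
      · push_neg at hcase
        have hInt : IntegrableOn (fun s => 1 / distBd D (β.toFun s)) (Icc u v)
            MeasureTheory.volume :=
          ((integrand_contOn hDo hDu β).mono (Icc_subset_Icc hum.1 hvm.2)).integrableOn_Icc
        have hGcont : ContinuousOn (fun x => β.qhLen u x) (Icc u v) := by
          have h := intervalIntegral.continuousOn_primitive_interval
            (a := u) (b := v) (μ := MeasureTheory.volume)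
            (f := fun s => 1 / distBd D (β.toFun s)) (by rwa [uIcc_of_le huv])
          rwa [uIcc_of_le huv] at h
        have hGu : β.qhLen u u = 0 := intervalIntegral.integral_same
        have hval : β.qhLen u v - (m:ℝ) ∈ Icc (β.qhLen u u) (β.qhLen u v) := by
          rw [hGu]
          constructor
          · linarith
          · have : (0:ℝ) ≤ (m:ℝ) := Nat.cast_nonneg m
            linarith
        obtain ⟨w, hw, hGw⟩ := intermediate_value_Icc huv hGcont hval
        have hGw' : β.qhLen u w = β.qhLen u v - (m:ℝ) := hGw
        have hwm : w ∈ Icc 0 β.len := ⟨htp.1.trans (hu.trans hw.1), (hw.2.trans hv).trans htq.2⟩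
        have hadd : β.qhLen u w + β.qhLen w v = β.qhLen u v :=
          β.qhLen_add hDo hDu hum hwm hvm
        have hq1 : β.qhLen u w ≤ 1 := by
          push_cast at hq
          rw [hGw']
          linarith
        have hq2 : β.qhLen w v ≤ (m:ℝ) := by
          rw [hGw'] at hadd
          linarith
        have hs1 := step u w hu hw.1 (hw.2.trans hv) hq1
        have hs2 := ih w v (hu.trans hw.1) hw.2 hv hq2
        have htri := dist_triangle (f (β.toFun u)) (f (β.toFun w)) (f (β.toFun v))
        push_cast
        push_cast at hs2
        linarith
  -- global quantities
  obtain ⟨kst, hkstdef⟩ : ∃ x, x = qhDist D' (f (β.toFun tp)) (f (β.toFun tq)) := ⟨_, rfl⟩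
  have hkst0 : 0 ≤ kst := by rw [hkstdef]; exact qhDist_nonneg _ _
  have hkD_pq : qhDist D (β.toFun tp) (β.toFun tq) ≤ M * kst + C := by
    have h := (hcqh _ hpd _ hqd).1
    rw [← hkstdef] at h
    rw [div_le_iff₀ hM0] at h
    nlinarith
  obtain ⟨T, hTdef⟩ : ∃ x, x = β.qhLen tp tq := ⟨_, rfl⟩
  have hT0 : 0 ≤ T := by rw [hTdef]; exact β.qhLen_nonneg htptq
  have hTb : T ≤ 4 * a ^ 2 * (M * kst + C) + 4 * a ^ 2 := by
    have h := hβ tp htp tq htq htptq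
    rw [← hTdef] at h
    nlinarith
  obtain ⟨r, hrdef⟩ : ∃ x, x = dist (f (β.toFun tp)) (f (β.toFun tq)) := ⟨_, rfl⟩
  have hr0 : 0 ≤ r := by rw [hrdef]; exact dist_nonneg
  have hchainr : r ≤ (T + 2) * (qhLam M C * d₀) := by
    have hm := chain ⌈T⌉₊ tp tq le_rfl htptq le_rfl (by rw [← hTdef]; exact Nat.le_ceil T)
    rw [← hrdef] at hm
    have hce : (⌈T⌉₊ : ℝ) ≤ T + 1 := by
      have := Nat.ceil_lt_add_one hT0
      linarith
    have hΛd : 0 < qhLam M C * d₀ := mul_pos hΛ hd₀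
    refine hm.trans ?_
    exact mul_le_mul_of_nonneg_right (by linarith) hΛd.le
  obtain ⟨ρ, hρdef⟩ : ∃ x, x = r / d₀ := ⟨_, rfl⟩
  have hρ0 : 0 ≤ ρ := by rw [hρdef]; exact div_nonneg hr0 hd₀.le
  have hup : kst ≤ 4 * (1 + c) * Real.log (1 + c * ρ) := by
    have h := qhDist_le_of_uniform hD'o hD'u hc hU hfp hfq
    rw [← hkstdef, ← hrdef, ← hd₀def, hdq] at h
    have hcr0 : (0:ℝ) ≤ c * r := mul_nonneg hc0.le hr0
    have hlog2 : Real.log (1 + c * r / (2 * d₀)) ≤ Real.log (1 + c * r / d₀) := by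
      apply Real.log_le_log (by positivity)
      have := div_le_div_of_nonneg_left hcr0 hd₀ (by linarith : d₀ ≤ 2 * d₀)
      linarith
    have hre : c * r / d₀ = c * ρ := by
      rw [hρdef, mul_div_assoc]
    rw [hre] at h hlog2
    have hmul := mul_le_mul_of_nonneg_left hlog2 (by linarith : (0:ℝ) ≤ 2 * (1 + c))
    nlinarith [hmul, h]
  have hρb : ρ ≤ qhP a M C + qhQ a c M C * Real.log (1 + c * ρ) := by
    have hr1 : ρ ≤ (T + 2) * qhLam M C := by
      rw [hρdef, div_le_iff₀ hd₀]
      nlinarith [hchainr, show (T + 2) * qhLam M C * d₀ = (T + 2) * (qhLam M C * d₀) from by ring]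
    have h5 : (T + 2) * qhLam M C ≤ (4 * a ^ 2 * (M * kst + C) + 4 * a ^ 2 + 2) * qhLam M C := by
      nlinarith
    have hK0 : (0:ℝ) ≤ 4 * a ^ 2 * M * qhLam M C := by
      nlinarith [mul_nonneg (mul_nonneg (sq_nonneg a) (by linarith : (0:ℝ) ≤ M)) hΛ.le]
    have h6 : (4 * a ^ 2 * (M * kst + C) + 4 * a ^ 2 + 2) * qhLam M C
        = qhP a M C + (4 * a ^ 2 * M * qhLam M C) * kst := by
      unfold qhP
      ring
    have h7 : (4 * a ^ 2 * M * qhLam M C) * kst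
        ≤ (4 * a ^ 2 * M * qhLam M C) * (4 * (1 + c) * Real.log (1 + c * ρ)) :=
      mul_le_mul_of_nonneg_left hup hK0
    have h8 : (4 * a ^ 2 * M * qhLam M C) * (4 * (1 + c) * Real.log (1 + c * ρ))
        = qhQ a c M C * Real.log (1 + c * ρ) := by
      unfold qhQ qhLam
      ring
    linarith
  have hρρ₀ : ρ ≤ qhRho a c M C := by
    have := bootstrap_ineq hρ0 hP0.le hQ0 hc0 hρb
    unfold qhRho
    linarith
  have hkstk₀ : kst ≤ qhK0 a c M C := by
    refine hup.trans ?_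
    unfold qhK0
    have hlog : Real.log (1 + c * ρ) ≤ Real.log (1 + c * qhRho a c M C) := by
      apply Real.log_le_log (by positivity)
      nlinarith
    nlinarith [mul_le_mul_of_nonneg_left hlog (by linarith : (0:ℝ) ≤ 4 * (1 + c))]
  have hTT₀ : T ≤ qhT0 a c M C := by
    unfold qhT0
    nlinarith [mul_le_mul_of_nonneg_left hkstk₀
      (by nlinarith [sq_nonneg a] : (0:ℝ) ≤ 4 * a ^ 2 * M)]
  -- now for the point t
  have htm : t ∈ Icc 0 β.len := ⟨htp.1.trans ht.1, ht.2.trans htq.2⟩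
  have hzd : β.toFun t ∈ D := β.mem t htm
  have hfz : f (β.toFun t) ∈ D' := hbij.mapsTo hzd
  have hdz : 0 < distBd D' (f (β.toFun t)) := distBd_pos hD'o hD'u hfz
  have hsplit2 : β.qhLen tp t + β.qhLen t tq = T := by
    rw [hTdef]; exact β.qhLen_add hDo hDu htp htm htq
  have hq1' : β.qhLen tp t ≤ qhT0 a c M C := by
    have := β.qhLen_nonneg ht.2
    linarith
  have hq2' : β.qhLen t tq ≤ qhT0 a c M C := by
    have := β.qhLen_nonneg ht.1
    linarith
  have hkzq : qhDist D' (f (β.toFun t)) (f (β.toFun tq)) ≤ qhK1 a c M C := by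
    have h := (hcqh _ hzd _ hqd).2
    have hle' : qhDist D (β.toFun t) (β.toFun tq) ≤ qhT0 a c M C :=
      (qhDist_le_qhLen β htm htq ht.2).trans hq2'
    unfold qhK1
    nlinarith
  have hkpz : qhDist D' (f (β.toFun tp)) (f (β.toFun t)) ≤ qhK1 a c M C := by
    have h := (hcqh _ hpd _ hzd).2
    have hle' : qhDist D (β.toFun tp) (β.toFun t) ≤ qhT0 a c M C :=
      (qhDist_le_qhLen β htp htm ht.1).trans hq1'
    unfold qhK1
    nlinarith
  have hE := Real.exp_pos (qhK1 a c M C)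
  -- distance bounds at t
  have hBzq : dist (f (β.toFun t)) (f (β.toFun tq))
      ≤ (Real.exp (qhK1 a c M C) - 1) * distBd D' (f (β.toFun t)) := by
    have hlow := qhDist_lower₁ hD'o hD'u hfz (hexists _ hfz _ hfq)
    have hpos : 0 < 1 + dist (f (β.toFun t)) (f (β.toFun tq)) / distBd D' (f (β.toFun t)) := by
      positivity
    have hratio : 1 + dist (f (β.toFun t)) (f (β.toFun tq)) / distBd D' (f (β.toFun t))
        ≤ Real.exp (qhK1 a c M C) := by
      rw [← Real.exp_log hpos]
      exact Real.exp_le_exp.mpr (hlow.trans hkzq)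
    exact (div_le_iff₀ hdz).mp (by linarith)
  have hBpz : dist (f (β.toFun tp)) (f (β.toFun t))
      ≤ (Real.exp (qhK1 a c M C) - 1) * distBd D' (f (β.toFun t)) := by
    have hlow := qhDist_lower₂ hD'o hD'u hfz (hexists _ hfp _ hfz)
    have hpos : 0 < 1 + dist (f (β.toFun tp)) (f (β.toFun t)) / distBd D' (f (β.toFun t)) := by
      positivity
    have hratio : 1 + dist (f (β.toFun tp)) (f (β.toFun t)) / distBd D' (f (β.toFun t))
        ≤ Real.exp (qhK1 a c M C) := by
      rw [← Real.exp_log hpos]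
      exact Real.exp_le_exp.mpr (hlow.trans hkpz)
    exact (div_le_iff₀ hdz).mp (by linarith)
  -- conclusion (1)
  have h1 : distBd D' (f (β.toFun tq))
      ≤ Real.exp (qhK1 a c M C) * distBd D' (f (β.toFun t)) := by
    have hlip : distBd D' (f (β.toFun tq))
        ≤ distBd D' (f (β.toFun t)) + dist (f (β.toFun tq)) (f (β.toFun t)) :=
      distBd_le_add_dist _ _
    rw [dist_comm] at hlip
    linarith
  have hA2 : qhA2 a c M C = Real.exp (qhK1 a c M C) * (1 + qhRho a c M C) := rfl
  refine ⟨?_, ?_, ?_⟩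
  · rw [hA2]
    nlinarith [hρ₀0, hdz, hE]
  · rw [hA2, dist_comm, ← hrdef]
    have hrρ : r ≤ qhRho a c M C * d₀ := by
      rw [hρdef] at hρρ₀
      rw [div_le_iff₀ hd₀] at hρρ₀
      linarith
    have hd₀z : 2 * d₀ ≤ Real.exp (qhK1 a c M C) * distBd D' (f (β.toFun t)) := by
      rw [← hdq]
      exact h1
    nlinarith [hρ₀0, hdz, hE]
  · apply max_le
    · refine hBpz.trans ?_
      rw [hA2]
      nlinarith [hρ₀0, hdz, hE]
    · rw [dist_comm]
      refine hBzq.trans ?_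
      rw [hA2]
      nlinarith [hρ₀0, hdz, hE]
end
end

section
/- Let n ≥ 2, a ≥ 1, let D ⊊ ℝⁿ be a domain, let α be an a-cone arc in D joining x and y, and let s₀ ∈ α bisect α, i.e. ℓ(α[x,s₀]) = ℓ(α[s₀,y]). Then for every u ∈ α[x,s₀] and every z ∈ α[u,s₀], one has d(z) ≥ (2·ℓ(α[u,z]) + d(u))/(4a); and symmetrically, for every v ∈ α[s₀,y] and every z ∈ α[s₀,v], one has d(z) ≥ (2·ℓ(α[v,z]) + d(v))/(4a). (This is Lemma 3.12.) -/
open Set Metric MeasureTheory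

noncomputable section

/-- **Lemma 3.12.** Let `D ⊊ ℝⁿ` (`n ≥ 2`) be a domain, `α` an `a`-cone arc (`a ≥ 1`)
joining `x` and `y` in `D`, and let `s₀ = α(t₀)` bisect `α`.  Then for every
`u ∈ α[x,s₀]` and every `z ∈ α[u,s₀]` one has `d(z) ≥ (2·ℓ(α[u,z]) + d(u))/(4a)`, and
symmetrically on the other half. -/
theorem lemma_3_12 (n : ℕ) (hn : 2 ≤ n) (a : ℝ) (ha : 1 ≤ a)
    (D : Set (EuclideanSpace ℝ (Fin n))) (hD : IsProperDomain D)
    (α : Arc n D) (x y : EuclideanSpace ℝ (Fin n)) (hxy : α.Joins x y)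
    (hcone : α.IsConeArc a)
    (t₀ : ℝ) (ht₀ : t₀ ∈ Icc (0:ℝ) α.len) (hbis : t₀ = α.len - t₀) :
    (∀ u ∈ Icc (0:ℝ) t₀, ∀ t ∈ Icc u t₀,
      (2 * (t - u) + distBd D (α.toFun u)) / (4 * a) ≤ distBd D (α.toFun t)) ∧
    (∀ v ∈ Icc t₀ α.len, ∀ t ∈ Icc t₀ v,
      (2 * (v - t) + distBd D (α.toFun v)) / (4 * a) ≤ distBd D (α.toFun t)) := by
  have ht0 : t₀ = α.len / 2 := by linarith [hbis]
  have hdistle : ∀ s ∈ Icc (0:ℝ) α.len, ∀ t ∈ Icc (0:ℝ) α.len, s ≤ t →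
      dist (α.toFun s) (α.toFun t) ≤ t - s := by
    intro s hs t ht hst
    have h := α.unitSpeed s hs t ht hst
    have h2 : edist (α.toFun s) (α.toFun t) ≤ eVariationOn α.toFun (Icc s t) :=
      eVariationOn.edist_le α.toFun ⟨le_refl s, hst⟩ ⟨hst, le_refl t⟩
    rw [h] at h2
    rw [edist_dist] at h2
    have := ENNReal.ofReal_le_ofReal_iff (by linarith) |>.mp h2
    exact this
  have ha' : (0:ℝ) < 4 * a := by linarith
  constructor
  · intro u hu t ht
    have hut : u ≤ t := ht.1
    have hulen : u ∈ Icc (0:ℝ) α.len := ⟨hu.1, by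
      have := ht₀.2; linarith [hu.2]⟩
    have htlen : t ∈ Icc (0:ℝ) α.len := ⟨le_trans hu.1 hut, by
      have := ht₀.2; linarith [ht.2]⟩
    have hdt : 0 ≤ distBd D (α.toFun t) := Metric.infDist_nonneg
    have hconet : t ≤ a * distBd D (α.toFun t) := by
      have h := hcone t htlen
      have : min t (α.len - t) = t := by
        apply min_eq_left; linarith [ht.2]
      rwa [this] at h
    have hlip : distBd D (α.toFun u) ≤ distBd D (α.toFun t) + (t - u) := by
      have h1 : distBd D (α.toFun u) ≤ distBd D (α.toFun t) + dist (α.toFun u) (α.toFun t) :=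
        Metric.infDist_le_infDist_add_dist
      have h2 := hdistle u hulen t htlen hut
      linarith
    rw [div_le_iff₀ ha']
    nlinarith [hu.1, hdt]
  · intro v hv t ht
    have htv : t ≤ v := ht.2
    have htlen : t ∈ Icc (0:ℝ) α.len := ⟨le_trans ht₀.1 ht.1, le_trans htv hv.2⟩
    have hvlen : v ∈ Icc (0:ℝ) α.len := ⟨le_trans ht₀.1 hv.1, hv.2⟩
    have hdt : 0 ≤ distBd D (α.toFun t) := Metric.infDist_nonneg
    have hconet : α.len - t ≤ a * distBd D (α.toFun t) := by
      have h := hcone t htlen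
      have : min t (α.len - t) = α.len - t := by
        apply min_eq_right; linarith [ht.1]
      rwa [this] at h
    have hlip : distBd D (α.toFun v) ≤ distBd D (α.toFun t) + (v - t) := by
      have h1 : distBd D (α.toFun v) ≤ distBd D (α.toFun t) + dist (α.toFun v) (α.toFun t) :=
        Metric.infDist_le_infDist_add_dist
      have h2 := hdistle t htlen v hvlen htv
      rw [dist_comm] at h2
      linarith
    rw [div_le_iff₀ ha']
    nlinarith [hv.2, hdt]
end
end

section
/- Let n ≥ 2, a ≥ 1, let D ⊊ ℝⁿ be a domain, and let α be an a-cone arc in D joining x and y. Then k_D(x,y) ≤ 4a·log(1 + ℓ(α)/min{d(x), d(y)}). (This is inequality (3.17).) -/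
open Set Metric MeasureTheory

noncomputable section

private lemma integral_inv_shift {c b : ℝ} (hc : 0 < c) (hb : 0 ≤ b) :
    ∫ t in (0:ℝ)..b, (t + c)⁻¹ = Real.log (1 + b / c) := by
  have h1 : ∫ t in (0:ℝ)..b, (t + c)⁻¹ = ∫ u in (0+c)..(b+c), u⁻¹ :=
    intervalIntegral.integral_comp_add_right (fun u => u⁻¹) c
  rw [h1, zero_add, integral_inv (notMem_uIcc_of_lt hc (by linarith))]
  congr 1
  field_simp
  ring

set_option maxHeartbeats 1000000 in
/-- **Inequality (3.17).** Let `D ⊊ ℝⁿ` (`n ≥ 2`) be a domain and `α` an `a`-cone arc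
(`a ≥ 1`) joining `x` and `y` in `D`.  Then
`k_D(x,y) ≤ 4a·log(1 + ℓ(α)/min{d(x),d(y)})`. -/
theorem ineq_3_17 (n : ℕ) (hn : 2 ≤ n) (a : ℝ) (ha : 1 ≤ a)
    (D : Set (EuclideanSpace ℝ (Fin n))) (hD : IsProperDomain D)
    (α : Arc n D) (x y : EuclideanSpace ℝ (Fin n)) (hxy : α.Joins x y)
    (hcone : α.IsConeArc a) :
    qhDist D x y ≤ 4 * a * Real.log (1 + α.len / min (distBd D x) (distBd D y)) := by
  obtain ⟨hx0, hyL⟩ := hxy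
  have hL0 : (0:ℝ) ≤ α.len := α.len_nonneg
  set L := α.len with hLdef
  have hDc : Dᶜ.Nonempty := by rw [Set.nonempty_compl]; exact hD.2.2
  have hdpos : ∀ t ∈ Icc (0:ℝ) L, 0 < distBd D (α.toFun t) := fun t ht =>
    (hD.1.isClosed_compl.notMem_iff_infDist_pos hDc).1 (by simpa using α.mem t ht)
  -- the arc is 1-Lipschitz
  have hlip : ∀ s ∈ Icc (0:ℝ) L, ∀ t ∈ Icc (0:ℝ) L, s ≤ t →
      dist (α.toFun s) (α.toFun t) ≤ t - s := by
    intro s hs t ht hst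
    have h1 : edist (α.toFun s) (α.toFun t) ≤ eVariationOn α.toFun (Icc s t) :=
      eVariationOn.edist_le _ (left_mem_Icc.2 hst) (right_mem_Icc.2 hst)
    rw [α.unitSpeed s hs t ht hst, edist_dist] at h1
    exact (ENNReal.ofReal_le_ofReal_iff (by linarith)).1 h1
  have hcont : ContinuousOn (fun t => distBd D (α.toFun t)) (Icc 0 L) := by
    have hlow : LipschitzOnWith 1 α.toFun (Icc 0 L) := by
      apply LipschitzOnWith.of_dist_le_mul
      intro s hs t ht
      rcases le_total s t with h | h
      · calc dist (α.toFun s) (α.toFun t) ≤ t - s := hlip s hs t ht h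
          _ ≤ 1 * dist s t := by
            rw [one_mul, Real.dist_eq, abs_sub_comm]; exact le_abs_self _
      · calc dist (α.toFun s) (α.toFun t) = dist (α.toFun t) (α.toFun s) := dist_comm _ _
          _ ≤ s - t := hlip t ht s hs h
          _ ≤ 1 * dist s t := by rw [one_mul, Real.dist_eq]; exact le_abs_self _
    exact (Metric.continuous_infDist_pt Dᶜ).comp_continuousOn hlow.continuousOn
  set dx := distBd D x with hdx
  set dy := distBd D y with hdy
  have hdx0 : 0 < dx := by
    rw [hdx, ← hx0]; exact hdpos 0 (left_mem_Icc.2 hL0)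
  have hdy0 : 0 < dy := by
    rw [hdy, ← hyL]; exact hdpos L (right_mem_Icc.2 hL0)
  set m := min dx dy with hm
  have hm0 : 0 < m := lt_min hdx0 hdy0
  set f : ℝ → ℝ := fun t => 1 / distBd D (α.toFun t) with hf
  -- integrabilities
  have hfint : IntervalIntegrable f volume 0 L := by
    apply ContinuousOn.intervalIntegrable
    rw [uIcc_of_le hL0]
    exact continuousOn_const.div hcont (fun t ht => (hdpos t ht).ne')
  have hhalf : L / 2 ∈ uIcc (0:ℝ) L := by
    rw [uIcc_of_le hL0]; constructor <;> linarith
  have hzero : (0:ℝ) ∈ uIcc (0:ℝ) L := by rw [uIcc_of_le hL0]; exact left_mem_Icc.2 hL0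
  have hLmem : L ∈ uIcc (0:ℝ) L := by rw [uIcc_of_le hL0]; exact right_mem_Icc.2 hL0
  have hfint1 : IntervalIntegrable f volume 0 (L/2) :=
    hfint.mono_set (uIcc_subset_uIcc hzero hhalf)
  have hfint2 : IntervalIntegrable f volume (L/2) L :=
    hfint.mono_set (uIcc_subset_uIcc hhalf hLmem)
  set g1 : ℝ → ℝ := fun t => 2 * a * (t + dx / 2)⁻¹ with hg1
  set g2 : ℝ → ℝ := fun t => 2 * a * (L - t + dy / 2)⁻¹ with hg2
  have hg1int : IntervalIntegrable g1 volume 0 (L/2) := by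
    apply ContinuousOn.intervalIntegrable
    apply continuousOn_const.mul
    apply ContinuousOn.inv₀ (continuous_id.add continuous_const).continuousOn
    intro t ht
    rw [uIcc_of_le (by linarith : (0:ℝ) ≤ L/2)] at ht
    have := ht.1; show t + dx / 2 ≠ 0; positivity
  have hg2int : IntervalIntegrable g2 volume (L/2) L := by
    apply ContinuousOn.intervalIntegrable
    apply continuousOn_const.mul
    apply ContinuousOn.inv₀ ((continuous_const.sub continuous_id).add continuous_const).continuousOn
    intro t ht
    rw [uIcc_of_le (by linarith : L/2 ≤ L)] at ht
    have h2 := ht.2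
    have : 0 ≤ L - t := by linarith
    show L - t + dy / 2 ≠ 0
    exact ne_of_gt (by linarith)
  -- pointwise bounds
  have hpt1 : ∀ t ∈ Icc (0:ℝ) (L/2), f t ≤ g1 t := by
    intro t ht
    obtain ⟨ht0, htL2⟩ := ht
    have htL : t ∈ Icc (0:ℝ) L := ⟨ht0, by linarith⟩
    have hd0 : 0 < distBd D (α.toFun t) := hdpos t htL
    set d := distBd D (α.toFun t) with hd
    have hcone1 : t ≤ a * d := by
      have := hcone t htL
      rwa [min_eq_left (by linarith : t ≤ L - t)] at this
    have hdist : dist x (α.toFun t) ≤ t := by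
      rw [← hx0]; simpa using hlip 0 (left_mem_Icc.2 hL0) t htL ht0
    have h2 : dx ≤ d + t := calc
      dx = infDist x Dᶜ := rfl
      _ ≤ infDist (α.toFun t) Dᶜ + dist x (α.toFun t) := infDist_le_infDist_add_dist
      _ ≤ d + t := by exact add_le_add le_rfl hdist
    have hda : d ≤ a * d := by nlinarith
    have hc0 : 0 < t + dx / 2 := by positivity
    have key : t + dx / 2 ≤ 2 * a * d := by nlinarith
    show 1 / d ≤ 2 * a * (t + dx / 2)⁻¹
    rw [← div_eq_mul_inv, div_le_div_iff₀ hd0 hc0]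
    nlinarith
  have hpt2 : ∀ t ∈ Icc (L/2) L, f t ≤ g2 t := by
    intro t ht
    obtain ⟨htL2, htL⟩ := ht
    have ht0 : (0:ℝ) ≤ t := by linarith
    have htI : t ∈ Icc (0:ℝ) L := ⟨ht0, htL⟩
    have hd0 : 0 < distBd D (α.toFun t) := hdpos t htI
    set d := distBd D (α.toFun t) with hd
    have hcone1 : L - t ≤ a * d := by
      have := hcone t htI
      rwa [min_eq_right (by linarith : L - t ≤ t)] at this
    have hdist : dist y (α.toFun t) ≤ L - t := by
      rw [← hyL, dist_comm]; exact hlip t htI L (right_mem_Icc.2 hL0) htL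
    have h2 : dy ≤ d + (L - t) := calc
      dy = infDist y Dᶜ := rfl
      _ ≤ infDist (α.toFun t) Dᶜ + dist y (α.toFun t) := infDist_le_infDist_add_dist
      _ ≤ d + (L - t) := add_le_add le_rfl hdist
    have hda : d ≤ a * d := by nlinarith
    have hc0 : 0 < L - t + dy / 2 := by
      have : 0 ≤ L - t := by linarith
      positivity
    show 1 / d ≤ 2 * a * (L - t + dy / 2)⁻¹
    rw [← div_eq_mul_inv, div_le_div_iff₀ hd0 hc0]
    nlinarith
  -- integral computations
  have hI1 : ∫ t in (0:ℝ)..(L/2), g1 t = 2 * a * Real.log (1 + L / dx) := by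
    rw [hg1, intervalIntegral.integral_const_mul,
      integral_inv_shift (by positivity) (by linarith)]
    have hx' : dx ≠ 0 := hdx0.ne'
    congr 2
    field_simp
  have hI2 : ∫ t in (L/2)..L, g2 t = 2 * a * Real.log (1 + L / dy) := by
    have hcomp : ∫ t in (L/2)..L, (L - t + dy/2)⁻¹ = ∫ u in (0:ℝ)..(L/2), (u + dy/2)⁻¹ := by
      calc ∫ t in (L/2)..L, (L - t + dy/2)⁻¹
          = ∫ u in (L - L)..(L - L/2), (u + dy/2)⁻¹ :=
            intervalIntegral.integral_comp_sub_left (fun u => (u + dy/2)⁻¹) L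
        _ = ∫ u in (0:ℝ)..(L/2), (u + dy/2)⁻¹ := by
            rw [sub_self, show L - L/2 = L/2 by ring]
    rw [hg2, intervalIntegral.integral_const_mul, hcomp,
      integral_inv_shift (by positivity) (by linarith)]
    have hy' : dy ≠ 0 := hdy0.ne'
    congr 2
    field_simp
  -- compare
  have hcmp1 : ∫ t in (0:ℝ)..(L/2), f t ≤ 2 * a * Real.log (1 + L / dx) := by
    rw [← hI1]
    exact intervalIntegral.integral_mono_on (by linarith) hfint1 hg1int hpt1
  have hcmp2 : ∫ t in (L/2)..L, f t ≤ 2 * a * Real.log (1 + L / dy) := by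
    rw [← hI2]
    exact intervalIntegral.integral_mono_on (by linarith) hfint2 hg2int hpt2
  have hsplit : α.qhLen 0 L = (∫ t in (0:ℝ)..(L/2), f t) + ∫ t in (L/2)..L, f t :=
    (intervalIntegral.integral_add_adjacent_intervals hfint1 hfint2).symm
  -- log monotonicity
  have hlogx : Real.log (1 + L / dx) ≤ Real.log (1 + L / m) := by
    apply Real.log_le_log (by positivity)
    have : L / dx ≤ L / m := div_le_div_of_nonneg_left hL0 hm0 (min_le_left _ _)
    linarith
  have hlogy : Real.log (1 + L / dy) ≤ Real.log (1 + L / m) := by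
    apply Real.log_le_log (by positivity)
    have : L / dy ≤ L / m := div_le_div_of_nonneg_left hL0 hm0 (min_le_right _ _)
    linarith
  have ha0 : (0:ℝ) ≤ 2 * a := by linarith
  have hbound : α.qhLen 0 L ≤ 4 * a * Real.log (1 + L / m) := by
    rw [hsplit]
    calc (∫ t in (0:ℝ)..(L/2), f t) + ∫ t in (L/2)..L, f t
        ≤ 2 * a * Real.log (1 + L / dx) + 2 * a * Real.log (1 + L / dy) :=
          add_le_add hcmp1 hcmp2
      _ ≤ 2 * a * Real.log (1 + L / m) + 2 * a * Real.log (1 + L / m) :=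
          add_le_add (mul_le_mul_of_nonneg_left hlogx ha0) (mul_le_mul_of_nonneg_left hlogy ha0)
      _ = 4 * a * Real.log (1 + L / m) := by ring
  -- conclude via csInf
  have hmem : α.qhLen 0 L ∈ {r | ∃ γ : Arc n D, γ.Joins x y ∧ r = γ.qhLen 0 γ.len} :=
    ⟨α, ⟨hx0, hyL⟩, rfl⟩
  have hbdd : BddBelow {r | ∃ γ : Arc n D, γ.Joins x y ∧ r = γ.qhLen 0 γ.len} := by
    refine ⟨0, fun r hr => ?_⟩
    obtain ⟨γ, _, rfl⟩ := hr
    apply intervalIntegral.integral_nonneg γ.len_nonneg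
    intro u _
    exact div_nonneg zero_le_one infDist_nonneg
  calc qhDist D x y ≤ α.qhLen 0 L := csInf_le hbdd hmem
    _ ≤ 4 * a * Real.log (1 + L / m) := hbound
end
end

section
/- Let n ≥ 2, let D ⊊ ℝⁿ be a domain, let γ be a rectifiable arc in D, let κ > 0, and let y₁, y₂, …, y_{m+1} be points occurring in this order along γ such that: (i) d(y_{j+1}) ≥ 2·d(y_j) for every j ∈ {1, …, m−1}; (ii) ℓ(γ[y_i, y_{i+1}]) ≤ 2κ·d(y_i) for every i ∈ {1, …, m}; and (iii) d(y_i) ≤ e^{κ}·d(z) for every i ∈ {1, …, m} and every z ∈ γ[y_i, y_{i+1}]. Then for every i ∈ {1, …, m} and every y ∈ γ[y_i, y_{i+1}], one has ℓ(γ[y₁, y]) ≤ 4κ·e^{κ}·d(y). (This is the summation argument (3.39)–(3.41) concluding the proof of Theorem 1.4.) -/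
open Set Metric MeasureTheory

noncomputable section

/-- **Summation argument (3.39)–(3.41).** Let `D ⊊ ℝⁿ` (`n ≥ 2`) be a domain, `γ` a
rectifiable arc in `D`, `κ > 0`, and let `γ(t 0), γ(t 1), …, γ(t m)` be points in order
along `γ` (these are `y₁, …, y_{m+1}`) such that: (i) `d(y_{j+1}) ≥ 2 d(y_j)` for
`j ∈ {1,…,m−1}`; (ii) `ℓ(γ[y_i, y_{i+1}]) ≤ 2κ d(y_i)` for `i ∈ {1,…,m}`; and (iii)
`d(y_i) ≤ e^κ d(z)` for every `z ∈ γ[y_i, y_{i+1}]`, `i ∈ {1,…,m}`.  Then for every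
`i ∈ {1,…,m}` and every `y ∈ γ[y_i, y_{i+1}]` one has `ℓ(γ[y₁, y]) ≤ 4κ e^κ d(y)`. -/
theorem summation_argument (n : ℕ) (hn : 2 ≤ n)
    (D : Set (EuclideanSpace ℝ (Fin n))) (hD : IsProperDomain D)
    (γ : Arc n D) (κ : ℝ) (hκ : 0 < κ)
    (m : ℕ) (t : ℕ → ℝ)
    (hmem : ∀ i ≤ m, t i ∈ Icc (0:ℝ) γ.len)
    (hmono : ∀ i < m, t i ≤ t (i + 1))
    (hdouble : ∀ i, i + 1 < m →
      2 * distBd D (γ.toFun (t i)) ≤ distBd D (γ.toFun (t (i + 1))))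
    (hlen : ∀ i < m, t (i + 1) - t i ≤ 2 * κ * distBd D (γ.toFun (t i)))
    (hcomp : ∀ i < m, ∀ s ∈ Icc (t i) (t (i + 1)),
      distBd D (γ.toFun (t i)) ≤ Real.exp κ * distBd D (γ.toFun s)) :
    ∀ i < m, ∀ s ∈ Icc (t i) (t (i + 1)),
      s - t 0 ≤ 4 * κ * Real.exp κ * distBd D (γ.toFun s) := by
  have hd0 : ∀ i, 0 ≤ distBd D (γ.toFun (t i)) := fun i => Metric.infDist_nonneg
  -- key claim: t i - t 0 ≤ 2κ d(y_i) for i < m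
  have key : ∀ i, i < m → t i - t 0 ≤ 2 * κ * distBd D (γ.toFun (t i)) := by
    intro i
    induction i with
    | zero =>
      intro _
      have := hd0 0
      nlinarith
    | succ i ih =>
      intro hi1
      have hi : i < m := Nat.lt_of_succ_lt hi1
      have h1 := hlen i hi
      have h2 := ih hi
      have h3 := hdouble i hi1
      nlinarith
  intro i hi s hs
  have h1 := key i hi
  have h2 := hlen i hi
  have h3 := hcomp i hi s hs
  have hexp : (1:ℝ) ≤ Real.exp κ := by
    have := Real.exp_pos κ
    nlinarith [Real.one_le_exp hκ.le]
  have hds : 0 ≤ distBd D (γ.toFun s) := Metric.infDist_nonneg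
  have hsub : s - t i ≤ t (i+1) - t i := by linarith [hs.2]
  have hdi := hd0 i
  nlinarith [mul_le_mul_of_nonneg_left h3 (by positivity : (0:ℝ) ≤ 4 * κ)]
end
end
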